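/- For σ > 0 and θ with |θ| > σ, setting ρ_θ := θ + σ^2/θ, the Stieltjes transform of the semicircle law satisfies g_σ(ρ_θ) = 1/θ. -/

import Mathlib

open intervalIntegral

set_option maxHeartbeats 1000000


noncomputable def Fsc (r ρ x : ℝ) : ℝ :=
  ρ * Real.arcsin (x/r) - Real.sqrt (r^2 - x^2) +
    Real.sqrt (ρ^2 - r^2) * Real.arcsin ((r^2 - ρ*x)/(r*(ρ-x)))

lemma deriv_Fsc (r ρ : ℝ) (hr : 0 < r) (hρ : r < ρ) {x : ℝ} (hx : x ∈ Set.Ioo (-r) r) :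
    HasDerivAt (Fsc r ρ) (Real.sqrt (r^2 - x^2) / (ρ - x)) x := by
  obtain ⟨hx1, hx2⟩ := hx
  set q := Real.sqrt (r^2 - x^2) with hqdef
  set s := Real.sqrt (ρ^2 - r^2) with hsdef
  have hrx : (0:ℝ) < r^2 - x^2 := by nlinarith
  have hsr : (0:ℝ) < ρ^2 - r^2 := by nlinarith
  have hρx : 0 < ρ - x := by nlinarith
  have hq0 : 0 < q := Real.sqrt_pos.2 hrx
  have hs0 : 0 < s := Real.sqrt_pos.2 hsr
  have hq : q^2 = r^2 - x^2 := Real.sq_sqrt hrx.le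
  have hs : s^2 = ρ^2 - r^2 := Real.sq_sqrt hsr.le
  -- term 1 : ρ * arcsin (x/r), derivative ρ / q
  have hxr1 : -1 < x/r := by rw [lt_div_iff₀ hr]; nlinarith
  have hxr2 : x/r < 1 := by rw [div_lt_one hr]; nlinarith
  have hsq1 : Real.sqrt (1 - (x/r)^2) = q/r := by
    rw [show 1 - (x/r)^2 = (r^2 - x^2)/r^2 by field_simp,
      Real.sqrt_div hrx.le, Real.sqrt_sq hr.le]
  have h1 : HasDerivAt (fun y => ρ * Real.arcsin (y/r)) (ρ / q) x := by
    have := (Real.hasDerivAt_arcsin hxr1.ne' hxr2.ne).comp x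
      ((hasDerivAt_id x).div_const r)
    have h := this.const_mul ρ
    convert h using 1
    rfl
    rfl
    rfl
    rw [hsq1]
    field_simp
  -- term 2 : - sqrt (r^2 - x^2), derivative x / q
  have h2 : HasDerivAt (fun y => Real.sqrt (r^2 - y^2)) (-x / q) x := by
    have hin : HasDerivAt (fun y : ℝ => r^2 - y^2) (-(2*x)) x := by
      have := ((hasDerivAt_pow 2 x).const_sub (r^2))
      convert this using 1; rfl; rfl; ring
    have := hin.sqrt hrx.ne'
    convert this using 1
    rw [← hqdef]
    field_simp
  -- term 3 : s * arcsin u, derivative -s^2/((ρ-x) q)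
  set u := (r^2 - ρ*x)/(r*(ρ-x)) with hudef
  have hden : r*(ρ-x) ≠ 0 := by positivity
  have h1u : 1 - u^2 = (q*s/(r*(ρ-x)))^2 := by
    rw [hudef]
    field_simp
    nlinarith [hq, hs]
  have hu2 : u^2 < 1 := by nlinarith [sq_nonneg (q*s/(r*(ρ-x))), h1u,
    (by positivity : 0 < (q*s/(r*(ρ-x)))^2)]
  have hu1 : -1 < u := by nlinarith
  have hu1' : u < 1 := by nlinarith
  have hsqu : Real.sqrt (1 - u^2) = q*s/(r*(ρ-x)) := by
    rw [h1u, Real.sqrt_sq (by positivity)]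
  have hu : HasDerivAt (fun y => (r^2 - ρ*y)/(r*(ρ-y))) ((r^2-ρ^2)/(r*(ρ-x)^2)) x := by
    have hn : HasDerivAt (fun y : ℝ => r^2 - ρ*y) (-ρ) x := by
      simpa using ((hasDerivAt_id x).const_mul ρ).const_sub (r^2)
    have hd : HasDerivAt (fun y : ℝ => r*(ρ-y)) (-r) x := by
      have := ((hasDerivAt_id x).const_sub ρ).const_mul r
      convert this using 1; rfl; rfl; rfl; ring
    have := hn.div hd hden
    convert this using 1
    rfl
    rfl
    rfl
    field_simp
    ring
  have h3 : HasDerivAt (fun y => s * Real.arcsin ((r^2 - ρ*y)/(r*(ρ-y))))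
      (-(s^2) / ((ρ-x) * q)) x := by
    have := ((Real.hasDerivAt_arcsin hu1.ne' hu1'.ne).comp x hu).const_mul s
    convert this using 1
    rfl
    rfl
    rfl
    rw [hsqu, hs]
    field_simp
    ring
  have := (h1.sub h2).add h3
  convert this using 1
  rfl
  rfl
  rfl
  have hnum : (ρ+x)*(ρ-x) - s^2 = q^2 := by linear_combination -hs - hq
  have e1 : ρ / q - -x / q + -s ^ 2 / ((ρ - x) * q) = ((ρ+x)*(ρ-x) - s^2)/((ρ-x)*q) := by
    field_simp; ring
  rw [e1, hnum]
  rw [eq_div_iff (by positivity)]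
  field_simp

lemma key_integral (r ρ : ℝ) (hr : 0 < r) (hρ : r < ρ) :
    (∫ x in (-r)..r, Real.sqrt (r^2 - x^2) / (ρ - x))
      = Real.pi * (ρ - Real.sqrt (ρ^2 - r^2)) := by
  have hle : -r ≤ r := by linarith
  have hcont : ContinuousOn (fun x => Real.sqrt (r^2 - x^2) / (ρ - x)) (Set.Icc (-r) r) := by
    apply ContinuousOn.div
    · exact (continuous_const.sub (continuous_pow 2)).sqrt.continuousOn
    · exact (continuous_const.sub continuous_id).continuousOn
    · intro x hx
      have := hx.2
      simp only [Set.mem_Icc] at hx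
      have : x < ρ := lt_of_le_of_lt hx.2 hρ
      intro h; nlinarith [sub_eq_zero.mp h]
  have hint : IntervalIntegrable (fun x => Real.sqrt (r^2 - x^2) / (ρ - x))
      MeasureTheory.volume (-r) r := by
    have heq : Set.uIcc (-r) r = Set.Icc (-r) r := Set.uIcc_of_le hle
    exact ContinuousOn.intervalIntegrable (heq ▸ hcont)
  have hFc : ContinuousOn (Fsc r ρ) (Set.Icc (-r) r) := by
    unfold Fsc
    apply ContinuousOn.add
    · apply ContinuousOn.sub
      · exact (Real.continuous_arcsin.comp (continuous_id.div_const r)).continuousOn.const_smul ρ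
        |>.congr (fun x _ => by simp [smul_eq_mul])
      · exact (continuous_const.sub (continuous_pow 2)).sqrt.continuousOn
    · apply ContinuousOn.mul continuousOn_const
      apply Real.continuous_arcsin.comp_continuousOn
      apply ContinuousOn.div (continuous_const.sub (continuous_const.mul continuous_id)).continuousOn
        (continuous_const.mul (continuous_const.sub continuous_id)).continuousOn
      intro x hx
      simp only [Set.mem_Icc] at hx
      have hρx : 0 < ρ - x := by linarith [hx.2]
      exact mul_ne_zero hr.ne' hρx.ne'
  have := intervalIntegral.integral_eq_sub_of_hasDeriv_right_of_le hle hFc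
    (fun x hx => (deriv_Fsc r ρ hr hρ hx).hasDerivWithinAt) hint
  rw [this]
  have hρr : 0 < ρ - r := by linarith
  have hu1 : (r^2 - ρ*r)/(r*(ρ-r)) = -1 := by field_simp; ring
  have hu2 : (r^2 - ρ*(-r))/(r*(ρ-(-r))) = 1 := by
    have : 0 < ρ + r := by linarith
    rw [div_eq_one_iff_eq (mul_pos hr (by linarith)).ne']; ring
  unfold Fsc
  rw [hu1, hu2, div_self hr.ne', show -r/r = -1 by field_simp]
  rw [show r^2 - r^2 = 0 by ring, show r^2 - (-r)^2 = 0 by ring]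
  simp [Real.arcsin_one, Real.arcsin_neg_one, Real.arcsin_neg, Real.sqrt_zero]
  ring

lemma pos_case (σ θ : ℝ) (hσ : 0 < σ) (hθ : σ < θ) :
    (∫ x in (-(2*σ))..(2*σ),
      (1/(2*Real.pi*σ^2)) * Real.sqrt (4*σ^2 - x^2) / ((θ + σ^2/θ) - x)) = 1/θ := by
  have hθ0 : 0 < θ := lt_trans hσ hθ
  have hπ : (0:ℝ) < Real.pi := Real.pi_pos
  set ρ := θ + σ^2/θ with hρdef
  have hρ : 2*σ < ρ := by
    have h : ρ - 2*σ = (θ-σ)^2/θ := by rw [hρdef]; field_simp; ring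
    have hp : 0 < (θ-σ)^2/θ := div_pos (pow_pos (by linarith) 2) hθ0
    have h2 : 0 < ρ - 2*σ := by rw [h]; exact hp
    exact sub_pos.mp h2
  have hkey := key_integral (2*σ) ρ (by positivity) hρ
  have hrw : (∫ x in (-(2*σ))..(2*σ),
      (1/(2*Real.pi*σ^2)) * Real.sqrt (4*σ^2 - x^2) / (ρ - x))
      = (1/(2*Real.pi*σ^2)) * ∫ x in (-(2*σ))..(2*σ), Real.sqrt ((2*σ)^2 - x^2) / (ρ - x) := by
    rw [← intervalIntegral.integral_const_mul]
    congr 1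
    ext x
    rw [show (2*σ)^2 = 4*σ^2 by ring]
    ring
  rw [hrw, hkey]
  have hsq : Real.sqrt (ρ^2 - (2*σ)^2) = θ - σ^2/θ := by
    rw [show ρ^2 - (2*σ)^2 = (θ - σ^2/θ)^2 by rw [hρdef]; field_simp; ring]
    apply Real.sqrt_sq
    rw [sub_nonneg, div_le_iff₀ hθ0]
    nlinarith
  rw [hsq, hρdef, show θ + σ^2/θ - (θ - σ^2/θ) = 2*(σ^2/θ) by ring]
  rw [div_mul_eq_mul_div, one_mul]
  rw [div_eq_div_iff (by positivity) (ne_of_gt hθ0)]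
  field_simp

/-- For `σ > 0` and `|θ| > σ`, with `ρ_θ = θ + σ^2/θ`, the Stieltjes transform of the
semicircle law (with density `(1/(2πσ^2))·sqrt(4σ^2-x^2)` on `[-2σ,2σ]`) satisfies
`g_σ(ρ_θ) = 1/θ`. -/
theorem stmt_1 (σ θ : ℝ) (hσ : 0 < σ) (hθ : σ < |θ|) :
    (∫ x in (-(2*σ))..(2*σ),
      (1/(2*Real.pi*σ^2)) * Real.sqrt (4*σ^2 - x^2) / ((θ + σ^2/θ) - x)) = 1/θ := by
  rcases le_or_gt 0 θ with hθ0 | hθ0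
  · rw [abs_of_nonneg hθ0] at hθ
    exact pos_case σ θ hσ hθ
  · rw [abs_of_neg hθ0] at hθ
    have hpos := pos_case σ (-θ) hσ hθ
    have hswap : (∫ x in (-(2*σ))..(2*σ),
        (1/(2*Real.pi*σ^2)) * Real.sqrt (4*σ^2 - x^2) / ((-θ + σ^2/(-θ)) - x))
        = - ∫ x in (-(2*σ))..(2*σ),
        (1/(2*Real.pi*σ^2)) * Real.sqrt (4*σ^2 - x^2) / ((θ + σ^2/θ) - x) := by
      have e := intervalIntegral.integral_comp_neg (a := -(2*σ)) (b := 2*σ) (fun x =>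
        (1/(2*Real.pi*σ^2)) * Real.sqrt (4*σ^2 - x^2) / ((-θ + σ^2/(-θ)) - x))
      simp only [neg_neg] at e
      rw [← e, ← intervalIntegral.integral_neg]
      congr 1
      ext x
      have hθne : θ ≠ 0 := ne_of_lt hθ0
      rw [show 4*σ^2 - (-x)^2 = 4*σ^2 - x^2 by ring,
        show (-θ + σ^2/(-θ)) - (-x) = -((θ + σ^2/θ) - x) by rw [div_neg]; ring,
        div_neg]
    rw [hswap] at hpos
    have : (∫ x in (-(2*σ))..(2*σ),
        (1/(2*Real.pi*σ^2)) * Real.sqrt (4*σ^2 - x^2) / ((θ + σ^2/θ) - x)) = -(1/(-θ)) := by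
      linarith [hpos]
    rw [this]
    field_simp
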